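/- Let X be a Hausdorff topological space, T : X → X continuous, E an eventual family of subsets of ℕ, and (x_n) a sequence in X that follows T with respect to E (for every S ∈ E there exist p, q ∈ S with x_p = T(x_q)). If y is an accumulation point of (x_n) with respect to E (every open neighborhood U of y has {n : x_n ∈ U} ∈ E), then T(y) = y. -/
import Mathlib


/-- If a sequence follows a continuous operator `T` with respect to an eventual family `E`
and `y` is an accumulation point of the sequence with respect to `E`, then `y` is a fixed
point of `T`. -/
theorem follows_acc_isFixedPt {X : Type*} [TopologicalSpace X] [T2Space X]
    (T : X → X) (hT : Continuous T) (E : Set (Set ℕ))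
    (hev : ∀ S ∈ E, ∀ S' : Set ℕ, S ⊆ S' → S' ∈ E)
    (x : ℕ → X)
    (hfollow : ∀ S ∈ E, ∃ p ∈ S, ∃ q ∈ S, x p = T (x q))
    (y : X)
    (hacc : ∀ U : Set X, IsOpen U → y ∈ U → {n : ℕ | x n ∈ U} ∈ E) :
    T y = y := by
  by_contra hne
  obtain ⟨U, V, hU, hV, hTy, hy, hUV⟩ := t2_separation hne
  have hW : IsOpen (V ∩ T ⁻¹' U) := hV.inter (hU.preimage hT)
  have hyW : y ∈ V ∩ T ⁻¹' U := ⟨hy, hTy⟩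
  obtain ⟨p, hp, q, hq, hpq⟩ := hfollow _ (hacc _ hW hyW)
  exact Set.disjoint_left.mp hUV (hpq ▸ hq.2) hp.1
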